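/- Let C be a binary self-dual [n, n/2, d] code with an automorphism σ of odd prime order p of type p-(c; f) (c cycles of length p and f fixed points). Define g(s) = Σ_{i=0}^{s-1} ⌈d/2^i⌉. Then pc ≥ g((p-1)c/2), and if f > c then f ≥ g((f-c)/2). -/

import Mathlib

open scoped Classical

/-- The Hamming weight of a binary vector. -/
noncomputable def wt {n : ℕ} (v : Fin n → ZMod 2) : ℕ :=
  (Finset.univ.filter fun i => v i ≠ 0).card

/-- The dual of a set of binary vectors with respect to the standard inner product. -/
def dualCode {n : ℕ} (C : Set (Fin n → ZMod 2)) : Set (Fin n → ZMod 2) :=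
  {w | ∀ v ∈ C, ∑ i, v i * w i = 0}
noncomputable def wt' {ι : Type} [Fintype ι] (v : ι → ZMod 2) : ℕ :=
  (Finset.univ.filter fun i => v i ≠ 0).card

noncomputable def cnt {ι : Type} [Fintype ι] (P : ι → Prop) : ℕ :=
  (Finset.univ.filter P).card

variable {ι : Type} [Fintype ι]

lemma filter_eq_filter {P Q : ι → Prop} (h1 : DecidablePred P) (h2 : DecidablePred Q)
    (h : ∀ i, P i ↔ Q i) :
    @Finset.filter ι P h1 Finset.univ = @Finset.filter ι Q h2 Finset.univ := by
  ext i
  simp only [Finset.mem_filter]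
  exact and_congr Iff.rfl (h i)

lemma cnt_congr {P Q : ι → Prop} (h : ∀ i, P i ↔ Q i) : cnt P = cnt Q :=
  congrArg Finset.card (filter_eq_filter _ _ h)

lemma cnt_eq {P : ι → Prop} (h1 : DecidablePred P) :
    (@Finset.filter ι P h1 Finset.univ).card = cnt P :=
  congrArg Finset.card (filter_eq_filter _ _ fun _ => Iff.rfl)

lemma wt'_eq_cnt (v : ι → ZMod 2) : wt' v = cnt (fun i => v i ≠ 0) :=
  cnt_eq _

lemma cnt_split (P Q : ι → Prop) :
    cnt P = cnt (fun i => P i ∧ Q i) + cnt (fun i => P i ∧ ¬ Q i) := by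
  have h := Finset.card_filter_add_card_filter_not
    (s := Finset.univ.filter P) (p := Q)
  rw [Finset.filter_filter, Finset.filter_filter] at h
  rw [cnt_eq, cnt_eq, cnt_eq] at h
  omega

lemma cnt_le_card (P : ι → Prop) : cnt P ≤ Fintype.card ι := Finset.card_filter_le _ _

lemma wt'_subtype (P : ι → Prop) {inst : Fintype {i // P i}} (u : ι → ZMod 2) :
    @wt' {i // P i} inst (fun i : {i // P i} => u i.1) = cnt (fun i => u i ≠ 0 ∧ P i) := by
  unfold wt' cnt
  apply Finset.card_bij (fun i _ => i.1)
  · intro a ha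
    simp only [Finset.mem_filter, Finset.mem_univ, true_and] at ha ⊢
    exact ⟨ha, a.2⟩
  · intro a _ b _ h
    exact Subtype.ext h
  · intro b hb
    simp only [Finset.mem_filter, Finset.mem_univ, true_and] at hb
    exact ⟨⟨b, hb.2⟩, by simp only [Finset.mem_filter, Finset.mem_univ, true_and]; exact hb.1, rfl⟩

lemma card_subtype_cnt (P : ι → Prop) {inst : Fintype {i // P i}} :
    @Fintype.card {i // P i} inst = cnt P := by
  rw [Subsingleton.elim inst (Subtype.fintype P)]
  rw [Fintype.card_subtype]
  exact cnt_eq _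

lemma zmod2_cases (a : ZMod 2) : a = 0 ∨ a = 1 := by fin_cases a <;> [exact Or.inl rfl; exact Or.inr rfl]

lemma wt'_zero : wt' (0 : ι → ZMod 2) = 0 := by
  unfold wt'; simp

lemma wt'_eq_zero {v : ι → ZMod 2} (h : wt' v = 0) : v = 0 := by
  funext i
  by_contra hi
  have hm : i ∈ Finset.univ.filter fun i => v i ≠ 0 := by
    simp only [Finset.mem_filter, Finset.mem_univ, true_and]; exact hi
  have := Finset.card_pos.mpr ⟨i, hm⟩
  unfold wt' at h
  omega

lemma wt'_le_card (v : ι → ZMod 2) : wt' v ≤ Fintype.card ι :=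
  Finset.card_filter_le _ _

lemma ceilDiv_le_iff {a b x : ℕ} (hb : 0 < b) : (a + b - 1) / b ≤ x ↔ a ≤ b * x := by
  rw [Nat.div_le_iff_le_mul_add_pred hb]
  omega

lemma ceil_comp (a : ℕ) {m n : ℕ} (hm : 0 < m) (hn : 0 < n) :
    ((a + m - 1) / m + n - 1) / n = (a + m * n - 1) / (m * n) := by
  have hmn : 0 < m * n := Nat.mul_pos hm hn
  have key : ∀ x, (((a + m - 1) / m + n - 1) / n ≤ x ↔ (a + m * n - 1) / (m * n) ≤ x) := by
    intro x
    rw [ceilDiv_le_iff hn, ceilDiv_le_iff hm, ceilDiv_le_iff hmn, mul_assoc]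
  exact le_antisymm ((key _).2 le_rfl) ((key _).1 le_rfl)

lemma cnt_or_disjoint {P Q : ι → Prop} (h : ∀ i, ¬ (P i ∧ Q i)) :
    cnt (fun i => P i ∨ Q i) = cnt P + cnt Q := by
  rw [cnt_split (fun i => P i ∨ Q i) P]
  congr 1
  · exact cnt_congr fun i => by tauto
  · exact cnt_congr fun i => by tauto

theorem griesmer : ∀ (k : ℕ) (ι : Type) [Fintype ι]
    (D : Submodule (ZMod 2) (ι → ZMod 2)) (d : ℕ),
    k ≤ Module.finrank (ZMod 2) D → (∀ v ∈ D, v ≠ 0 → d ≤ wt' v) →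
    ∑ i ∈ Finset.range k, (d + 2 ^ i - 1) / 2 ^ i ≤ Fintype.card ι := by
  intro k
  induction k with
  | zero => intro ι _ D d _ _; simp
  | succ k IH =>
    intro ι _ D d hrank hd
    classical
    have hD : ∃ v ∈ D, v ≠ 0 := by
      by_contra h
      push_neg at h
      have hbot : D = ⊥ := by
        rw [eq_bot_iff]; intro x hx; simpa using h x hx
      rw [hbot, finrank_bot] at hrank; omega
    obtain ⟨v, hvmem, hvmin⟩ : ∃ v ∈ Finset.univ.filter
        (fun u => u ∈ D ∧ u ≠ 0), ∀ u ∈ Finset.univ.filter (fun u => u ∈ D ∧ u ≠ 0),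
          wt' v ≤ wt' u := by
      obtain ⟨v0, hv0, hv0'⟩ := hD
      exact Finset.exists_min_image _ wt' ⟨v0, by simp [hv0, hv0']⟩
    simp only [Finset.mem_filter, Finset.mem_univ, true_and] at hvmem
    obtain ⟨hvD, hv0⟩ := hvmem
    have hvmin' : ∀ u ∈ D, u ≠ 0 → wt' v ≤ wt' u := by
      intro u hu hu0; exact hvmin u (by simp [hu, hu0])
    set w := wt' v with hw
    have h1w : 1 ≤ w := by
      rcases Nat.eq_zero_or_pos w with h | h
      · exact absurd (wt'_eq_zero h) hv0
      · exact h
    have hdw : d ≤ w := hd v hvD hv0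
    -- the residual code
    set P : ι → Prop := fun i => v i = 0 with hP
    set res : (ι → ZMod 2) →ₗ[ZMod 2] ({i // P i} → ZMod 2) :=
      LinearMap.funLeft (ZMod 2) (ZMod 2) (Subtype.val) with hres
    have hresapp : ∀ u (i : {i // P i}), res u i = u i.1 := fun u i => rfl
    have hresv : res v = 0 := by funext i; exact i.2
    have hresw : ∀ u, wt' (res u) = cnt (fun i => u i ≠ 0 ∧ P i) := fun u => wt'_subtype P u
    have hvv : v + v = 0 := by
      funext i; exact CharTwo.add_self_eq_zero (v i)
    -- counting identities
    have keyu : ∀ u : ι → ZMod 2,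
        wt' u = cnt (fun i => u i ≠ 0 ∧ v i ≠ 0) + wt' (res u) := by
      intro u
      rw [wt'_eq_cnt u, cnt_split (fun i => u i ≠ 0) (fun i => v i ≠ 0)]
      congr 1
      rw [hresw u]
      exact cnt_congr fun i => by rw [hP]; simp [not_not]
    have keyv : ∀ u : ι → ZMod 2,
        w = cnt (fun i => u i ≠ 0 ∧ v i ≠ 0) + cnt (fun i => u i = 0 ∧ v i ≠ 0) := by
      intro u
      rw [hw, wt'_eq_cnt v, cnt_split (fun i => v i ≠ 0) (fun i => u i ≠ 0)]
      congr 1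
      · exact cnt_congr fun i => by tauto
      · exact cnt_congr fun i => by simp [not_not]; tauto
    have keyuv : ∀ u : ι → ZMod 2,
        wt' (u + v) = cnt (fun i => u i = 0 ∧ v i ≠ 0) + wt' (res u) := by
      intro u
      rw [wt'_eq_cnt (u + v), hresw u]
      have hz : ∀ a b : ZMod 2, (a + b ≠ 0) ↔ ((a = 0 ∧ b ≠ 0) ∨ (a ≠ 0 ∧ b = 0)) := by decide
      rw [cnt_congr (Q := fun i => (u i = 0 ∧ v i ≠ 0) ∨ (u i ≠ 0 ∧ v i = 0))
        (fun i => by rw [Pi.add_apply]; exact hz (u i) (v i))]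
      rw [cnt_or_disjoint (fun i => by tauto)]
    -- the kernel of restriction to D is contained in the span of v
    have dich : ∀ u ∈ D, res u = 0 → u = 0 ∨ u = v := by
      intro u hu h0
      by_contra hcon
      push_neg at hcon
      obtain ⟨hu0, huv⟩ := hcon
      have hr : wt' (res u) = 0 := by rw [h0, wt'_zero]
      have huvD : u + v ∈ D := D.add_mem hu hvD
      have huv0 : u + v ≠ 0 := by
        intro h
        apply huv
        have : u + v + v = v := by rw [h]; simp
        rwa [add_assoc, hvv, add_zero] at this
      have e1 := keyu u
      have e2 := keyv u
      have e3 := keyuv u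
      have i1 := hvmin' u hu hu0
      have i2 := hvmin' (u + v) huvD huv0
      rw [hr] at e1 e3
      omega
    -- rank of the residual code
    have hker : LinearMap.ker (res.domRestrict D) ≤
        Submodule.span (ZMod 2) {(⟨v, hvD⟩ : D)} := by
      intro x hx
      rw [LinearMap.mem_ker, LinearMap.domRestrict_apply] at hx
      rcases dich x.1 x.2 hx with h | h
      · have : x = 0 := Subtype.ext h
        rw [this]; exact Submodule.zero_mem _
      · have : x = ⟨v, hvD⟩ := Subtype.ext h
        rw [this]; exact Submodule.mem_span_singleton_self _
    have hkerrank : Module.finrank (ZMod 2) (LinearMap.ker (res.domRestrict D)) ≤ 1 := by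
      refine le_trans (Submodule.finrank_mono hker) ?_
      have : (⟨v, hvD⟩ : D) ≠ 0 := by
        intro h; apply hv0; exact congrArg Subtype.val h
      rw [finrank_span_singleton this]
    have hrn := LinearMap.finrank_range_add_finrank_ker (res.domRestrict D)
    rw [LinearMap.range_domRestrict] at hrn
    have hrank' : k ≤ Module.finrank (ZMod 2) (D.map res) := by omega
    -- minimum distance of the residual code
    have hd' : ∀ x ∈ D.map res, x ≠ 0 → (w + 1) / 2 ≤ wt' x := by
      rintro x hx hx0
      obtain ⟨u, hu, rfl⟩ := Submodule.mem_map.mp hx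
      have hu0 : u ≠ 0 := by rintro rfl; simp at hx0
      have huvD : u + v ∈ D := D.add_mem hu hvD
      have huv0 : u + v ≠ 0 := by
        intro h
        apply hx0
        have : res (u + v) = 0 := by rw [h]; simp
        rwa [map_add, hresv, add_zero] at this
      have e1 := keyu u
      have e2 := keyv u
      have e3 := keyuv u
      have i1 := hvmin' u hu hu0
      have i2 := hvmin' (u + v) huvD huv0
      have hle : w ≤ 2 * wt' (res u) := by omega
      have := (ceilDiv_le_iff (a := w) (b := 2) (x := wt' (res u)) (by norm_num)).2 hle
      omega
    have IHres := IH {i // P i} (D.map res) ((w + 1) / 2) hrank' hd'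
    -- cardinality of the residual index type
    have hcard : Fintype.card {i // P i} + w = Fintype.card ι := by
      rw [card_subtype_cnt P, hw, wt'_eq_cnt v]
      have := cnt_split (ι := ι) (fun _ => True) (fun i => v i = 0)
      have htrue : cnt (ι := ι) (fun _ => True) = Fintype.card ι := by
        unfold cnt
        congr 1
        ext i
        simp
      rw [htrue] at this
      rw [this]
      congr 1
      · exact cnt_congr fun i => by rw [hP]; tauto
      · exact cnt_congr fun i => by tauto
    -- term transformation
    have hterm : ∀ i : ℕ, ((w + 1) / 2 + 2 ^ i - 1) / 2 ^ i = (w + 2 ^ (i + 1) - 1) / 2 ^ (i + 1) := by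
      intro i
      have h2 : (0:ℕ) < 2 := by norm_num
      have h2i : (0:ℕ) < 2 ^ i := pow_pos h2 i
      have := ceil_comp w h2 h2i
      have e : w + 2 - 1 = w + 1 := by omega
      rw [e] at this
      rw [this, pow_succ, mul_comm (2 ^ i) 2]
    -- put everything together
    have hsum : ∑ i ∈ Finset.range (k + 1), (w + 2 ^ i - 1) / 2 ^ i ≤ Fintype.card ι := by
      rw [Finset.sum_range_succ']
      have e0 : (w + 2 ^ 0 - 1) / 2 ^ 0 = w := by simp
      rw [e0]
      have : ∑ i ∈ Finset.range k, (w + 2 ^ (i + 1) - 1) / 2 ^ (i + 1)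
          = ∑ i ∈ Finset.range k, ((w + 1) / 2 + 2 ^ i - 1) / 2 ^ i := by
        exact Finset.sum_congr rfl fun i _ => (hterm i).symm
      rw [this]
      omega
    refine le_trans (Finset.sum_le_sum fun i _ => ?_) hsum
    exact Nat.div_le_div_right (by omega)

lemma griesmer_subtype {n : ℕ} (P : Fin n → Prop)
    (D : Submodule (ZMod 2) (Fin n → ZMod 2)) (d k : ℕ)
    (hzero : ∀ v ∈ D, ∀ i, ¬ P i → v i = 0)
    (hd : ∀ v ∈ D, v ≠ 0 → d ≤ wt' v)
    (hk : k ≤ Module.finrank (ZMod 2) D) :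
    ∑ i ∈ Finset.range k, (d + 2 ^ i - 1) / 2 ^ i ≤ cnt P := by
  classical
  set res : (Fin n → ZMod 2) →ₗ[ZMod 2] ({i // P i} → ZMod 2) :=
    LinearMap.funLeft (ZMod 2) (ZMod 2) Subtype.val with hres
  have hwt : ∀ u ∈ D, wt' (res u) = wt' u := by
    intro u hu
    have h1 : wt' (res u) = cnt (fun i => u i ≠ 0 ∧ P i) := wt'_subtype P u
    rw [h1, wt'_eq_cnt]
    refine (cnt_congr fun i => ⟨fun h => ⟨h, ?_⟩, fun h => h.1⟩).symm
    by_contra hP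
    exact h (hzero u hu i hP)
  have hker : LinearMap.ker (res.domRestrict D) = ⊥ := by
    rw [eq_bot_iff]
    intro x hx
    rw [LinearMap.mem_ker, LinearMap.domRestrict_apply] at hx
    have hx0 : (x : Fin n → ZMod 2) = 0 := by
      funext i
      by_cases hP : P i
      · exact congrFun hx ⟨i, hP⟩
      · exact hzero x.1 x.2 i hP
    rw [Submodule.mem_bot]
    exact Subtype.ext hx0
  have hrn := LinearMap.finrank_range_add_finrank_ker (res.domRestrict D)
  rw [LinearMap.range_domRestrict, hker, finrank_bot, add_zero] at hrn
  have happ := griesmer k {i // P i} (D.map res) d (by rw [hrn]; exact hk) ?_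
  · rw [card_subtype_cnt P] at happ
    exact happ
  · rintro x hx hx0
    obtain ⟨u, hu, rfl⟩ := Submodule.mem_map.mp hx
    have hu0 : u ≠ 0 := by rintro rfl; simp at hx0
    rw [hwt u hu]
    exact hd u hu hu0

section Perm

variable {n p c : ℕ} (σ : Equiv.Perm (Fin n))

lemma fix_same_cycle {x y : Fin n} (hx : σ x = x) (h : σ.SameCycle x y) : y = x := by
  obtain ⟨k, -, hk⟩ := h.exists_pow_eq'
  rw [← hk, Equiv.Perm.pow_apply_eq_self_of_apply_eq_self hx]

lemma apply_pow_const {v : Fin n → ZMod 2} (hv : ∀ i, v (σ i) = v i) :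
    ∀ (k : ℕ) (i : Fin n), v ((σ ^ k) i) = v i := by
  intro k
  induction k with
  | zero => intro i; simp
  | succ k IH =>
    intro i
    rw [pow_succ, Equiv.Perm.mul_apply, IH (σ i), hv i]

lemma same_cycle_const {v : Fin n → ZMod 2} (hv : ∀ i, v (σ i) = v i)
    {x y : Fin n} (h : σ.SameCycle x y) : v y = v x := by
  obtain ⟨k, -, hk⟩ := h.exists_pow_eq'
  rw [← hk, apply_pow_const σ hv]

lemma sum_orbit (hσp : σ ^ p = 1) (hp0 : 0 < p)
    {M : Type} [AddCommMonoid M] (x : Fin n) (hx : σ x ≠ x)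
    (hcyc : (σ.cycleOf x).support.card = p) (g : Fin n → M) :
    ∑ i ∈ Finset.univ.filter (fun i => σ.SameCycle x i), g i
      = ∑ j ∈ Finset.range p, g ((σ ^ j) x) := by
  classical
  refine (Finset.sum_bij (fun (j : ℕ) (_ : j ∈ Finset.range p) => (σ ^ j) x) ?_ ?_ ?_ ?_).symm
  · intro a _
    simp only [Finset.mem_filter, Finset.mem_univ, true_and]
    exact ⟨(a : ℤ), by simp [zpow_natCast]⟩
  · intro a ha b hb hab
    simp only [Finset.mem_range] at ha hb
    have hxsup : x ∈ (σ.cycleOf x).support := by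
      rw [Equiv.Perm.mem_support_cycleOf_iff]
      exact ⟨Equiv.Perm.SameCycle.refl σ x, Equiv.Perm.mem_support.mpr hx⟩
    have hmod := ((σ.isCycleOn_support_cycleOf x).pow_apply_eq_pow_apply hxsup
      (m := a) (n := b)).mp hab
    rw [hcyc] at hmod
    have h2 : a % p = b % p := hmod
    rw [Nat.mod_eq_of_lt ha, Nat.mod_eq_of_lt hb] at h2
    exact h2
  · intro i hi
    simp only [Finset.mem_filter, Finset.mem_univ, true_and] at hi
    obtain ⟨k, -, hk⟩ := hi.exists_pow_eq'
    refine ⟨k % p, Finset.mem_range.mpr (Nat.mod_lt _ hp0), ?_⟩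
    rw [← hk]
    conv_rhs => rw [← Nat.div_add_mod k p]
    rw [pow_add, pow_mul, hσp, one_pow, one_mul]
  · intro a _; rfl

lemma sigma_pow_p (hct : σ.cycleType = Multiset.replicate c p) : σ ^ p = 1 := by
  have h := Equiv.Perm.lcm_cycleType σ
  rw [hct] at h
  have hdvd : (Multiset.replicate c p).lcm ∣ p :=
    Multiset.lcm_dvd.mpr fun b hb => by rw [Multiset.eq_of_mem_replicate hb]
  rw [h] at hdvd
  exact orderOf_dvd_iff_pow_eq_one.mp hdvd

lemma support_card_eq (hct : σ.cycleType = Multiset.replicate c p) :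
    σ.support.card = p * c := by
  have h := Equiv.Perm.sum_cycleType σ
  rw [hct, Multiset.sum_replicate, smul_eq_mul, mul_comm] at h
  exact h.symm

lemma cycle_len (hct : σ.cycleType = Multiset.replicate c p)
    {x : Fin n} (hx : σ x ≠ x) : (σ.cycleOf x).support.card = p := by
  have hmem : (σ.cycleOf x).support.card ∈ σ.cycleType := by
    rw [Equiv.Perm.cycleType_def]
    exact Multiset.mem_map_of_mem _
      (Finset.mem_val.mpr (Equiv.Perm.cycleOf_mem_cycleFactorsFinset_iff.mpr (Equiv.Perm.mem_support.mpr hx)))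
  rw [hct] at hmem
  exact Multiset.eq_of_mem_replicate hmem

end Perm

lemma cnt_true {ι : Type} [Fintype ι] : cnt (fun _ : ι => True) = Fintype.card ι := by
  unfold cnt
  congr 1
  ext i
  simp

lemma cnt_not {ι : Type} [Fintype ι] (P : ι → Prop) :
    cnt P + cnt (fun i => ¬ P i) = Fintype.card ι := by
  have h := cnt_split (fun _ : ι => True) P
  rw [cnt_true] at h
  rw [h]
  congr 1
  · exact cnt_congr fun i => by tauto
  · exact cnt_congr fun i => by tauto
/-- (Yorgov.)  Let `C` be a binary self-dual `[n, n/2, d]` code with an automorphism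
`σ` of odd prime order `p` of type `p-(c; f)` (`c` cycles of length `p` and `f` fixed
points, `n = pc + f`).  With `g s = ∑_{i=0}^{s-1} ⌈d/2^i⌉`, we have
`pc ≥ g((p-1)c/2)`, and `f ≥ g((f-c)/2)` whenever `f > c`. -/
theorem yorgov_type_constraints {n p c f d : ℕ} (hp : p.Prime) (hodd : Odd p)
    (C : Submodule (ZMod 2) (Fin n → ZMod 2))
    (hsd : (C : Set (Fin n → ZMod 2)) = dualCode (C : Set (Fin n → ZMod 2)))
    (hdim : Module.finrank (ZMod 2) C = n / 2)
    (hex : ∃ v ∈ C, v ≠ 0 ∧ wt v = d)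
    (hmin : ∀ v ∈ C, v ≠ 0 → d ≤ wt v)
    (σ : Equiv.Perm (Fin n))
    (hauto : ∀ v ∈ C, (fun i => v (σ i)) ∈ C)
    (hct : σ.cycleType = Multiset.replicate c p)
    (hn : n = p * c + f) :
    letI g : ℕ → ℕ := fun s => ∑ i ∈ Finset.range s, (d + 2 ^ i - 1) / 2 ^ i
    p * c ≥ g ((p - 1) * c / 2) ∧ (f > c → f ≥ g ((f - c) / 2)) := by
  classical
  obtain ⟨m, hm⟩ := hodd
  have hp0 : 0 < p := hp.pos
  have hσp : σ ^ p = 1 := sigma_pow_p σ hct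
  have hsupp : σ.support.card = p * c := support_card_eq σ hct
  have hp2 : ((p : ℕ) : ZMod 2) = 1 := by
    rw [← ZMod.natCast_mod, Nat.odd_iff.mp ⟨m, hm⟩, Nat.cast_one]
  have hpsmul : ∀ x : ZMod 2, p • x = x := by
    intro x; rw [nsmul_eq_mul, hp2, one_mul]
  -- the averaging operator T
  let T : (Fin n → ZMod 2) →ₗ[ZMod 2] (Fin n → ZMod 2) :=
    { toFun := fun v i => ∑ j ∈ Finset.range p, v ((σ ^ j) i)
      map_add' := fun u v => by funext i; simp [Finset.sum_add_distrib]
      map_smul' := fun r v => by funext i; simp [Finset.mul_sum] }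
  have hTapp : ∀ (v : Fin n → ZMod 2) i, T v i = ∑ j ∈ Finset.range p, v ((σ ^ j) i) :=
    fun _ _ => rfl
  have hTfixpt : ∀ (v : Fin n → ZMod 2) i, σ i = i → T v i = v i := by
    intro v i hi
    rw [hTapp]
    rw [Finset.sum_congr rfl (fun j _ => by
      rw [Equiv.Perm.pow_apply_eq_self_of_apply_eq_self hi])]
    rw [Finset.sum_const, Finset.card_range, hpsmul]
  have hTconst : ∀ (v : Fin n → ZMod 2), (∀ i, v (σ i) = v i) → T v = v := by
    intro v hv
    funext i
    rw [hTapp, Finset.sum_congr rfl (fun j _ => apply_pow_const σ hv j i),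
      Finset.sum_const, Finset.card_range, hpsmul]
  have hTσ : ∀ (v : Fin n → ZMod 2) i, T v (σ i) = T v i := by
    intro v i
    rw [hTapp, hTapp]
    rw [Finset.sum_congr rfl (fun j _ => by
      rw [show (σ ^ j) (σ i) = (σ ^ (j + 1)) i from by
        rw [pow_succ, Equiv.Perm.mul_apply]])]
    have h1 := Finset.sum_range_succ' (fun j => v ((σ ^ j) i)) p
    have h2 := Finset.sum_range_succ (fun j => v ((σ ^ j) i)) p
    have hfp : v ((σ ^ p) i) = v ((σ ^ 0) i) := by rw [hσp, pow_zero]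
    rw [hfp] at h2
    have h3 := h1.symm.trans h2
    simpa [pow_zero] using add_right_cancel h3
  have hTmem : ∀ v ∈ C, T v ∈ C := by
    have hcomp : ∀ (k : ℕ), ∀ v ∈ C, (fun i => v ((σ ^ k) i)) ∈ C := by
      intro k
      induction k with
      | zero => intro v hv; simpa using hv
      | succ k IH =>
        intro v hv
        have hmem := hauto _ (IH v hv)
        have heq : (fun i => v ((σ ^ (k + 1)) i)) = (fun i => v ((σ ^ k) (σ i))) := by
          funext i; rw [pow_succ, Equiv.Perm.mul_apply]
        rw [heq]
        exact hmem
    intro v hv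
    have hTv : T v = ∑ j ∈ Finset.range p, (fun i => v ((σ ^ j) i)) := by
      funext i
      rw [hTapp, Finset.sum_apply]
    rw [hTv]
    exact Submodule.sum_mem C fun j _ => hcomp j v hv
  -- fixed subcode
  let fixSub : Submodule (ZMod 2) (Fin n → ZMod 2) :=
    { carrier := {v | ∀ i, v (σ i) = v i}
      add_mem' := fun ha hb i => by simp [ha i, hb i]
      zero_mem' := fun i => rfl
      smul_mem' := fun r v hv i => by simp [hv i] }
  let F := C ⊓ fixSub
  -- quotient by cycles
  let sc : Setoid (Fin n) := ⟨σ.SameCycle,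
    ⟨fun x => Equiv.Perm.SameCycle.refl σ x, fun h => h.symm, fun h1 h2 => h1.trans h2⟩⟩
  let Q := Quotient sc
  haveI instQ : Fintype Q := @Quotient.fintype _ _ sc (fun a b => Classical.propDecidable _)
  haveI instDQ : DecidableEq Q := Classical.decEq _
  have hout : ∀ i : Fin n, σ.SameCycle (Quotient.mk sc i).out i :=
    fun i => Quotient.exact (Quotient.out_eq (Quotient.mk sc i))
  let π : (Fin n → ZMod 2) →ₗ[ZMod 2] (Q → ZMod 2) :=
    { toFun := fun v q => v q.out
      map_add' := fun u v => rfl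
      map_smul' := fun r v => rfl }
  have hπapp : ∀ (v : Fin n → ZMod 2) (q : Q), π v q = v q.out := fun _ _ => rfl
  let G := F.map π
  -- fibers of the quotient map
  have hfiber : ∀ q : Q, Finset.univ.filter (fun i => Quotient.mk sc i = q)
      = Finset.univ.filter (fun i => σ.SameCycle q.out i) := by
    intro q
    apply filter_eq_filter
    intro i
    constructor
    · intro h; rw [← h]; exact hout i
    · intro h; rw [← Quotient.out_eq q]; exact (Quotient.sound h).symm
  have hclasssum : ∀ (v : Fin n → ZMod 2) (q : Q),
      ∑ i ∈ Finset.univ.filter (fun i => Quotient.mk sc i = q), v i = T v q.out := by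
    intro v q
    rw [hfiber q]
    by_cases hq : σ q.out = q.out
    · have hsing : Finset.univ.filter (fun i => σ.SameCycle q.out i) = {q.out} := by
        ext i
        simp only [Finset.mem_filter, Finset.mem_univ, true_and, Finset.mem_singleton]
        exact ⟨fun h => fix_same_cycle σ hq h,
          fun h => h ▸ Equiv.Perm.SameCycle.refl σ _⟩
      rw [hsing, Finset.sum_singleton, hTfixpt v q.out hq]
    · rw [sum_orbit σ hσp hp0 q.out hq (cycle_len σ hct hq) v, hTapp]
  have hpart : ∀ (w : Fin n → ZMod 2), (∀ i, w (σ i) = w i) →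
      ∑ i, w i = ∑ q : Q, w q.out := by
    intro w hw
    have h0 := Finset.sum_fiberwise (Finset.univ : Finset (Fin n))
      (fun i => Quotient.mk sc i) w
    rw [← h0]
    refine Finset.sum_congr rfl fun q _ => ?_
    rw [hclasssum w q, hTconst w hw]
  -- bilinear form on Q → ZMod 2
  let BQ : LinearMap.BilinForm (ZMod 2) (Q → ZMod 2) :=
    LinearMap.mk₂ (ZMod 2) (fun u v => ∑ q : Q, u q * v q)
      (fun a b c' => by simp [add_mul, Finset.sum_add_distrib])
      (fun r a b => by simp [Finset.mul_sum, smul_eq_mul, mul_assoc])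
      (fun a b c' => by simp [mul_add, Finset.sum_add_distrib])
      (fun r a b => by simp [Finset.mul_sum, smul_eq_mul, mul_left_comm])
  have hBQapp : ∀ u v : Q → ZMod 2, BQ u v = ∑ q : Q, u q * v q := fun _ _ => rfl
  have hrefl : BQ.IsRefl := by
    intro u v h
    rw [hBQapp] at h ⊢
    rw [Finset.sum_congr rfl (fun q _ => mul_comm (v q) (u q))]
    exact h
  have hnondeg : BQ.Nondegenerate := by
    refine (LinearMap.IsRefl.nondegenerate_iff_separatingLeft hrefl).mpr ?_
    intro x hx
    funext q
    have hq := hx (Pi.single q 1)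
    rw [hBQapp] at hq
    simpa [Pi.single_apply, mul_ite] using hq
  -- G has the same rank as F
  have hGrank : Module.finrank (ZMod 2) G = Module.finrank (ZMod 2) F := by
    have hker : LinearMap.ker (π.domRestrict F) = ⊥ := by
      rw [eq_bot_iff]
      intro x hx
      rw [LinearMap.mem_ker, LinearMap.domRestrict_apply] at hx
      have hfix := (Submodule.mem_inf.mp x.2).2
      have hx0 : (x : Fin n → ZMod 2) = 0 := by
        funext i
        have h1 : (x : Fin n → ZMod 2) i = (x : Fin n → ZMod 2) (Quotient.mk sc i).out :=
          same_cycle_const σ hfix (hout i)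
        rw [h1]
        simpa [hπapp] using congrFun hx (Quotient.mk sc i)
      rw [Submodule.mem_bot]
      exact Subtype.ext hx0
    have hrn := LinearMap.finrank_range_add_finrank_ker (π.domRestrict F)
    rw [LinearMap.range_domRestrict, hker, finrank_bot, add_zero] at hrn
    exact hrn
  -- G is self-orthogonal
  have hGG : G ≤ BQ.orthogonal G := by
    rintro y hy
    rw [LinearMap.BilinForm.mem_orthogonal_iff]
    rintro x hx
    obtain ⟨u, hu, rfl⟩ := Submodule.mem_map.mp hx
    obtain ⟨v', hv', rfl⟩ := Submodule.mem_map.mp hy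
    show BQ (π u) (π v') = 0
    rw [hBQapp]
    obtain ⟨huC, hufix⟩ := Submodule.mem_inf.mp hu
    obtain ⟨hv'C, hv'fix⟩ := Submodule.mem_inf.mp hv'
    have hpw : ∑ i, u i * v' i = ∑ q : Q, u q.out * v' q.out :=
      hpart (fun i => u i * v' i) (fun i => by rw [hufix i, hv'fix i])
    show (∑ q : Q, u q.out * v' q.out) = 0
    rw [← hpw]
    have hv'dual : v' ∈ dualCode (C : Set (Fin n → ZMod 2)) := by rw [← hsd]; exact hv'C
    exact hv'dual u huC
  -- the dual of G is contained in G
  have hOrthG : BQ.orthogonal G ≤ G := by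
    intro y hy
    rw [LinearMap.BilinForm.mem_orthogonal_iff] at hy
    set yh : Fin n → ZMod 2 := fun i => y (Quotient.mk sc i) with hyh
    have hyfix : ∀ i, yh (σ i) = yh i := by
      intro i
      show y (Quotient.mk sc (σ i)) = y (Quotient.mk sc i)
      have : σ.SameCycle i (σ i) := ⟨1, by simp⟩
      rw [Quotient.sound this.symm]
    have hyC : yh ∈ C := by
      rw [show (yh ∈ C) = (yh ∈ (C : Set (Fin n → ZMod 2))) from rfl, hsd]
      intro v hv
      have hfw := Finset.sum_fiberwise (Finset.univ : Finset (Fin n))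
        (fun i => Quotient.mk sc i) (fun i => v i * yh i)
      rw [← hfw]
      have hinner : ∀ q : Q,
          ∑ i ∈ Finset.univ.filter (fun i => Quotient.mk sc i = q), v i * yh i
            = T v q.out * y q := by
        intro q
        rw [Finset.sum_congr rfl (fun i hi => by
          simp only [Finset.mem_filter, Finset.mem_univ, true_and] at hi
          rw [show yh i = y q from by rw [hyh]; simp only []; rw [hi]])]
        rw [← Finset.sum_mul, hclasssum v q]
      rw [Finset.sum_congr rfl fun q _ => hinner q]
      have hTvF : T v ∈ F := Submodule.mem_inf.mpr ⟨hTmem v hv, fun i => hTσ v i⟩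
      exact hy (π (T v)) (Submodule.mem_map_of_mem hTvF)
    have hyF : yh ∈ F := Submodule.mem_inf.mpr ⟨hyC, hyfix⟩
    have hπy : π yh = y := by
      funext q
      show y (Quotient.mk sc q.out) = y q
      rw [Quotient.out_eq]
    exact hπy ▸ Submodule.mem_map_of_mem hyF
  have h2G : 2 * Module.finrank (ZMod 2) G = Fintype.card Q := by
    have horth := LinearMap.BilinForm.finrank_orthogonal hnondeg G
    rw [Module.finrank_fintype_fun_eq_card] at horth
    have hle : Module.finrank (ZMod 2) G ≤ Fintype.card Q := by
      rw [← Module.finrank_fintype_fun_eq_card (η := Q) (R := ZMod 2)]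
      exact Submodule.finrank_le G
    have h1 := Submodule.finrank_mono hGG
    have h2 := Submodule.finrank_mono hOrthG
    omega
  -- counting fixed points and cycles
  have hsuppcnt : σ.support.card = cnt (fun i => ¬ (σ i = i)) := by
    have hsupdef : σ.support = Finset.univ.filter (fun x => σ x ≠ x) := rfl
    rw [hsupdef]
    exact cnt_eq _
  have hfixcnt : cnt (fun i : Fin n => σ i = i) = f := by
    have hsplit := cnt_not (fun i : Fin n => σ i = i)
    rw [Fintype.card_fin] at hsplit
    omega
  have hQfixcnt : cnt (fun q : Q => σ q.out = q.out) = f := by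
    rw [← hfixcnt]
    unfold cnt
    symm
    apply Finset.card_bij (fun i _ => Quotient.mk sc i)
    · intro i hi
      simp only [Finset.mem_filter, Finset.mem_univ, true_and] at hi ⊢
      have hoi := fix_same_cycle σ hi ((hout i).symm)
      rw [hoi]
      exact hi
    · intro a ha b hb hab
      simp only [Finset.mem_filter, Finset.mem_univ, true_and] at ha hb
      exact (fix_same_cycle σ ha (Quotient.exact hab)).symm
    · intro q hq
      simp only [Finset.mem_filter, Finset.mem_univ, true_and] at hq
      exact ⟨q.out, by simp only [Finset.mem_filter, Finset.mem_univ, true_and]; exact hq,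
        Quotient.out_eq q⟩
  have hmkfix : ∀ i : Fin n, ¬ (σ i = i) → ¬ (σ (Quotient.mk sc i).out = (Quotient.mk sc i).out) := by
    intro i hi heq
    have h2 := fix_same_cycle σ heq (hout i)
    apply hi
    rw [h2]
    exact heq
  have hQnonfix : cnt (fun q : Q => ¬ (σ q.out = q.out)) = c := by
    have hcf := Finset.card_eq_sum_card_fiberwise
      (s := σ.support) (t := Finset.univ.filter (fun q : Q => ¬ (σ q.out = q.out)))
      (f := fun i => Quotient.mk sc i)
      (by
        intro i hi
        simp only [Finset.mem_coe, Finset.mem_filter, Finset.mem_univ, true_and]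
        exact hmkfix i (Equiv.Perm.mem_support.mp hi))
    have hfibcard : ∀ q ∈ Finset.univ.filter (fun q : Q => ¬ (σ q.out = q.out)),
        (σ.support.filter (fun i => Quotient.mk sc i = q)).card = p := by
      intro q hq
      simp only [Finset.mem_filter, Finset.mem_univ, true_and] at hq
      have hful : σ.support.filter (fun i => Quotient.mk sc i = q)
          = Finset.univ.filter (fun i => σ.SameCycle q.out i) := by
        rw [← hfiber q]
        ext i
        simp only [Finset.mem_filter, Finset.mem_univ, true_and, Equiv.Perm.mem_support]
        constructor
        · intro h; exact h.2
        · intro h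
          refine ⟨?_, h⟩
          intro hfix
          have h1 : σ.SameCycle q.out i := by rw [← h]; exact hout i
          have h2 := fix_same_cycle σ hfix h1.symm
          rw [← h2] at hfix
          exact hq hfix
      rw [hful]
      have := sum_orbit σ hσp hp0 q.out hq (cycle_len σ hct hq) (fun _ => (1 : ℕ))
      rw [Finset.sum_const, Finset.sum_const, Finset.card_range, smul_eq_mul, smul_eq_mul,
        mul_one, mul_one] at this
      exact this
    rw [Finset.sum_congr rfl hfibcard, Finset.sum_const, smul_eq_mul, mul_comm, hsupp] at hcf
    have ht : (Finset.univ.filter (fun q : Q => ¬ (σ q.out = q.out))).card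
        = cnt (fun q : Q => ¬ (σ q.out = q.out)) := cnt_eq _
    rw [ht] at hcf
    exact (Nat.eq_of_mul_eq_mul_left hp0 hcf.symm)
  have hQcard : Fintype.card Q = f + c := by
    have := cnt_not (fun q : Q => σ q.out = q.out)
    omega
  have hFrank2 : 2 * Module.finrank (ZMod 2) F = f + c := by
    rw [← hGrank, h2G, hQcard]
  -- rank-nullity for T restricted to C
  have hCrank : Module.finrank (ZMod 2) F
      + Module.finrank (ZMod 2) (C ⊓ LinearMap.ker T : Submodule (ZMod 2) (Fin n → ZMod 2)) = n / 2 := by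
    have hrn := LinearMap.finrank_range_add_finrank_ker (T.domRestrict C)
    rw [LinearMap.range_domRestrict] at hrn
    have hrange : C.map T = F := by
      apply le_antisymm
      · intro x hx
        obtain ⟨v, hv, rfl⟩ := Submodule.mem_map.mp hx
        exact Submodule.mem_inf.mpr ⟨hTmem v hv, fun i => hTσ v i⟩
      · intro v hv
        obtain ⟨hvC, hvfix⟩ := Submodule.mem_inf.mp hv
        exact Submodule.mem_map.mpr ⟨v, hvC, hTconst v hvfix⟩
    have hkereq : Module.finrank (ZMod 2) (LinearMap.ker (T.domRestrict C))
        = Module.finrank (ZMod 2) (C ⊓ LinearMap.ker T : Submodule (ZMod 2) (Fin n → ZMod 2)) := by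
      rw [LinearMap.ker_domRestrict]
      have hcomap : Submodule.comap C.subtype (LinearMap.ker T)
          = Submodule.comap C.subtype (C ⊓ LinearMap.ker T) := by
        rw [Submodule.comap_inf, Submodule.comap_subtype_self, top_inf_eq]
      rw [hcomap]
      exact (Submodule.comapSubtypeEquivOfLe inf_le_left).finrank_eq
    rw [hrange, hkereq, hdim] at hrn
    exact hrn
  refine ⟨?_, ?_⟩
  · -- part 1
    have hEzero : ∀ v ∈ (C ⊓ LinearMap.ker T : Submodule (ZMod 2) (Fin n → ZMod 2)),
        ∀ i, ¬ (i ∈ σ.support) → v i = 0 := by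
      intro v hv i hi
      have hfix : σ i = i := by
        by_contra hne
        exact hi (Equiv.Perm.mem_support.mpr hne)
      have h1 : T v i = v i := hTfixpt v i hfix
      have h2 : T v = 0 := LinearMap.mem_ker.mp (Submodule.mem_inf.mp hv).2
      rw [h2] at h1
      exact h1.symm.trans rfl
    have hEd : ∀ v ∈ (C ⊓ LinearMap.ker T : Submodule (ZMod 2) (Fin n → ZMod 2)),
        v ≠ 0 → d ≤ wt' v :=
      fun v hv h0 => hmin v (Submodule.mem_inf.mp hv).1 h0
    have hEk : (p - 1) * c / 2 ≤ Module.finrank (ZMod 2)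
        (C ⊓ LinearMap.ker T : Submodule (ZMod 2) (Fin n → ZMod 2)) := by
      have e2 : (p - 1) * c = 2 * (m * c) := by
        rw [hm, Nat.add_sub_cancel]; ring
      rw [e2, Nat.mul_div_cancel_left _ (by norm_num : (0:ℕ) < 2)]
      have e3 : n = 2 * (m * c) + c + f := by
        rw [hn, hm]; ring
      obtain ⟨M, hM⟩ : ∃ M, m * c = M := ⟨_, rfl⟩
      rw [hM] at e3 ⊢
      omega
    have happ := griesmer_subtype (fun i => i ∈ σ.support)
      (C ⊓ LinearMap.ker T) d ((p - 1) * c / 2) hEzero hEd hEk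
    have hcnt : cnt (fun i : Fin n => i ∈ σ.support) = p * c := by
      rw [← hsupp]
      rw [show cnt (fun i : Fin n => i ∈ σ.support)
        = (Finset.univ.filter (fun i => i ∈ σ.support)).card from (cnt_eq _).symm]
      rw [Finset.filter_univ_mem]
    rw [hcnt] at happ
    exact happ
  · -- part 2
    intro hfc
    let Qs : Q → Prop := fun q => ¬ (σ q.out = q.out)
    let φ : (Fin n → ZMod 2) →ₗ[ZMod 2] ({q // Qs q} → ZMod 2) :=
      LinearMap.funLeft (ZMod 2) (ZMod 2) (fun q => q.1.out)
    have hD2zero : ∀ v ∈ (F ⊓ LinearMap.ker φ : Submodule (ZMod 2) (Fin n → ZMod 2)),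
        ∀ i, ¬ (σ i = i) → v i = 0 := by
      intro v hv i hi
      obtain ⟨hvF, hvker⟩ := Submodule.mem_inf.mp hv
      have hvfix := (Submodule.mem_inf.mp hvF).2
      have hQs : Qs (Quotient.mk sc i) := hmkfix i hi
      have h1 : v i = v (Quotient.mk sc i).out := same_cycle_const σ hvfix (hout i)
      rw [h1]
      exact congrFun (LinearMap.mem_ker.mp hvker) ⟨Quotient.mk sc i, hQs⟩
    have hD2d : ∀ v ∈ (F ⊓ LinearMap.ker φ : Submodule (ZMod 2) (Fin n → ZMod 2)),
        v ≠ 0 → d ≤ wt' v :=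
      fun v hv h0 => hmin v (Submodule.mem_inf.mp (Submodule.mem_inf.mp hv).1).1 h0
    have hD2k : (f - c) / 2 ≤ Module.finrank (ZMod 2)
        (F ⊓ LinearMap.ker φ : Submodule (ZMod 2) (Fin n → ZMod 2)) := by
      have hrn := LinearMap.finrank_range_add_finrank_ker (φ.domRestrict F)
      rw [LinearMap.range_domRestrict] at hrn
      have hkereq : Module.finrank (ZMod 2) (LinearMap.ker (φ.domRestrict F))
          = Module.finrank (ZMod 2) (F ⊓ LinearMap.ker φ : Submodule (ZMod 2) (Fin n → ZMod 2)) := by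
        rw [LinearMap.ker_domRestrict]
        have hcomap : Submodule.comap F.subtype (LinearMap.ker φ)
            = Submodule.comap F.subtype (F ⊓ LinearMap.ker φ) := by
          rw [Submodule.comap_inf, Submodule.comap_subtype_self, top_inf_eq]
        rw [hcomap]
        exact (Submodule.comapSubtypeEquivOfLe inf_le_left).finrank_eq
      have hranle : Module.finrank (ZMod 2) (F.map φ) ≤ c := by
        have h1 : Module.finrank (ZMod 2) (F.map φ)
            ≤ Module.finrank (ZMod 2) ({q // Qs q} → ZMod 2) := Submodule.finrank_le _
        rw [Module.finrank_fintype_fun_eq_card, card_subtype_cnt Qs] at h1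
        rw [hQnonfix] at h1
        exact h1
      rw [hkereq] at hrn
      omega
    have happ := griesmer_subtype (fun i => σ i = i)
      (F ⊓ LinearMap.ker φ) d ((f - c) / 2) hD2zero hD2d hD2k
    rw [hfixcnt] at happ
    exact happ
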